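/- Let X be a conjugacy class of involutions in G̃ = Z ⋊ W that contains the element (a, 0) for some involution a of W, and let X̂ be the conjugacy class of a in W. Suppose C(W, X̂) is connected with diameter at most d (every two elements of X̂ are joined by a path of length at most d), and suppose there is a natural number k such that for every u ∈ Z with (a, u) ∈ X there exists c ∈ X̂ with (c, 0) ∈ X and with (a, u) joined to (c, 0) in C(G̃, X) by a path of length at most k. Then C(G̃, X) is connected with diameter at most d + k. -/

import Mathlib

/-- The (multiplicative) group structure that `AddAut Z` carried in older Mathlib:
multiplication is composition, `(e₁ * e₂) m = e₁ (e₂ m)`. -/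
instance addAutMulGroup {Z : Type*} [AddCommGroup Z] : Group (AddAut Z) where
  mul g h := AddEquiv.trans h g
  one := AddEquiv.refl _
  inv := AddEquiv.symm
  mul_assoc _ _ _ := rfl
  one_mul _ := rfl
  mul_one _ := rfl
  inv_mul_cancel := AddEquiv.self_trans_symm

theorem addAutMul_apply {Z : Type*} [AddCommGroup Z] (e₁ e₂ : AddAut Z) (m : Z) :
    (e₁ * e₂) m = e₁ (e₂ m) := rfl

@[simp] theorem addAutOne_apply {Z : Type*} [AddCommGroup Z] (m : Z) :
    (1 : AddAut Z) m = m := rfl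

/-- The semidirect product `Z ⋊ W`, where the group `W` acts on the right on the additive
abelian group `Z` by additive automorphisms (the right action is encoded as a homomorphism
from the multiplicative opposite of `W`).  Elements are pairs `(a, u)` with `a ∈ W`, `u ∈ Z`,
and multiplication is given by `(a, u) * (b, v) = (a * b, u ^ b + v)`, where `u ^ b` denotes
the action of `b` on `u`. -/
@[ext]
structure SDP {W Z : Type*} [Group W] [AddCommGroup Z] (φ : Wᵐᵒᵖ →* AddAut Z) where
  /-- the `W`-component -/
  w : W
  /-- the `Z`-component -/
  z : Z

namespace SDP

variable {W Z : Type*} [Group W] [AddCommGroup Z] {φ : Wᵐᵒᵖ →* AddAut Z}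

instance : Mul (SDP φ) := ⟨fun x y => ⟨x.w * y.w, φ (MulOpposite.op y.w) x.z + y.z⟩⟩
instance : One (SDP φ) := ⟨⟨1, 0⟩⟩
instance : Inv (SDP φ) := ⟨fun x => ⟨x.w⁻¹, -(φ (MulOpposite.op x.w⁻¹) x.z)⟩⟩

@[simp] theorem mul_w (x y : SDP φ) : (x * y).w = x.w * y.w := rfl
@[simp] theorem mul_z (x y : SDP φ) : (x * y).z = φ (MulOpposite.op y.w) x.z + y.z := rfl
@[simp] theorem one_w : (1 : SDP φ).w = 1 := rfl
@[simp] theorem one_z : (1 : SDP φ).z = 0 := rfl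
@[simp] theorem inv_w (x : SDP φ) : x⁻¹.w = x.w⁻¹ := rfl
@[simp] theorem inv_z (x : SDP φ) : x⁻¹.z = -(φ (MulOpposite.op x.w⁻¹) x.z) := rfl

instance : Group (SDP φ) where
  mul_assoc x y z := by
    ext
    · simp [mul_assoc]
    · simp only [mul_z, mul_w, map_add]
      rw [← addAutMul_apply, ← map_mul, ← MulOpposite.op_mul, add_assoc]
  one_mul x := by ext <;> simp
  mul_one x := by ext <;> simp
  inv_mul_cancel x := by
    ext
    · simp
    · simp only [mul_z, inv_w, inv_z, mul_w, inv_mul_cancel, one_z, map_neg]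
      rw [← addAutMul_apply, ← map_mul, ← MulOpposite.op_mul]
      simp

end SDP

/-- The commuting involution graph on a set `X` of elements of a group `G`: the vertices are
the elements of `X`, and two distinct vertices are adjacent iff they commute in `G`. -/
def commGraph (G : Type*) [Group G] (X : Set G) : SimpleGraph X where
  Adj x y := (x : G) ≠ (y : G) ∧ (x : G) * y = (y : G) * x
  symm := ⟨fun x y h => ⟨h.1.symm, h.2.symm⟩⟩
  loopless := ⟨fun x h => h.1 rfl⟩


section Aux

open SimpleGraph

/-- Conjugation by a fixed element as a graph homomorphism of the commuting graph
on a conjugation-closed set. -/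
def commGraphConjHom {G : Type*} [Group G] {X : Set G}
    (hXc : ∀ (g x : G), x ∈ X → g * x * g⁻¹ ∈ X) (g : G) :
    commGraph G X →g commGraph G X where
  toFun x := ⟨g * x * g⁻¹, hXc g x x.2⟩
  map_rel' := by
    rintro ⟨x, hx⟩ ⟨y, hy⟩ ⟨hne, hcomm⟩
    refine ⟨fun h => hne ?_, ?_⟩
    · exact mul_left_cancel (mul_right_cancel h)
    · calc g * x * g⁻¹ * (g * y * g⁻¹) = g * (x * y) * g⁻¹ := by group
        _ = g * (y * x) * g⁻¹ := by rw [hcomm]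
        _ = g * y * g⁻¹ * (g * x * g⁻¹) := by group

/-- Lifting the commuting graph on `Xhat ⊆ W` into the commuting graph on
`X ⊆ SDP φ` via `c ↦ (c, 0)`. -/
def commGraphLiftHom {W Z : Type*} [Group W] [AddCommGroup Z] {φ : Wᵐᵒᵖ →* AddAut Z}
    {X : Set (SDP φ)} {Xhat : Set W}
    (h0 : ∀ c ∈ Xhat, (⟨c, 0⟩ : SDP φ) ∈ X) :
    commGraph W Xhat →g commGraph (SDP φ) X where
  toFun c := ⟨⟨c, 0⟩, h0 c c.2⟩
  map_rel' := by
    rintro ⟨b, hb⟩ ⟨c, hc⟩ ⟨hne, hcomm⟩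
    refine ⟨fun h => hne (congrArg SDP.w h), ?_⟩
    ext
    · exact hcomm
    · simp

end Aux

/-- Let X be a conjugacy class of involutions in G-tilde = Z ⋊ W that contains
the element (a, 0) for some involution a of W, and let X-hat be the conjugacy class of a in
W.  Suppose C(W, X-hat) is connected with diameter at most d, and suppose there is a natural
number k such that for every u ∈ Z with (a, u) ∈ X there exists c ∈ X-hat with (c, 0) ∈ X
and with (a, u) joined to (c, 0) in C(G-tilde, X) by a path of length at most k.  Then
C(G-tilde, X) is connected with diameter at most d + k. -/


theorem stmt5 {W Z : Type*} [Group W] [AddCommGroup Z] (φ : Wᵐᵒᵖ →* AddAut Z)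
    (a : W) (ha : orderOf a = 2)
    (X : Set (SDP φ)) (hX : X = {y | IsConj (⟨a, 0⟩ : SDP φ) y})
    (Xhat : Set W) (hXhat : Xhat = {c | IsConj a c})
    (d k : ℕ)
    (hW : ∀ b c : Xhat, ∃ p : (commGraph W Xhat).Walk b c, p.length ≤ d)
    (hk : ∀ (u : Z) (hu : (⟨a, u⟩ : SDP φ) ∈ X),
      ∃ (c : W) (hc : c ∈ Xhat) (hc0 : (⟨c, 0⟩ : SDP φ) ∈ X),
        ∃ p : (commGraph (SDP φ) X).Walk ⟨⟨a, u⟩, hu⟩ ⟨⟨c, 0⟩, hc0⟩, p.length ≤ k) :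
    (commGraph (SDP φ) X).Connected ∧
      ∀ x y : X, ∃ p : (commGraph (SDP φ) X).Walk x y, p.length ≤ d + k :=  by
  subst hX hXhat
  set X : Set (SDP φ) := {y | IsConj (⟨a, 0⟩ : SDP φ) y} with hX
  set Xhat : Set W := {c | IsConj a c} with hXhat
  have hbase : (⟨a, 0⟩ : SDP φ) ∈ X := IsConj.refl _
  have haXhat : a ∈ Xhat := IsConj.refl _
  have hXc : ∀ (g x : SDP φ), x ∈ X → g * x * g⁻¹ ∈ X := by
    intro g x hx
    exact hx.trans (isConj_iff.mpr ⟨g, rfl⟩)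
  -- every `c ∈ Xhat` gives `(c, 0) ∈ X`
  have h0 : ∀ c ∈ Xhat, (⟨c, 0⟩ : SDP φ) ∈ X := by
    intro c hc
    obtain ⟨g, hg⟩ := isConj_iff.mp hc
    refine isConj_iff.mpr ⟨⟨g, 0⟩, ?_⟩
    ext
    · simpa using hg
    · simp
  -- the `w`-component of any element of `X` lies in `Xhat`
  have hwX : ∀ x : SDP φ, x ∈ X → x.w ∈ Xhat := by
    intro x hx
    obtain ⟨g, hg⟩ := isConj_iff.mp hx
    refine isConj_iff.mpr ⟨g.w, ?_⟩
    have := congrArg SDP.w hg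
    simpa using this
  -- key: every vertex reaches the base point `(a, 0)` within `k + d` steps
  have key : ∀ x : X, ∃ p : (commGraph (SDP φ) X).Walk x ⟨⟨a, 0⟩, hbase⟩,
      p.length ≤ d + k := by
    rintro ⟨x, hx⟩
    obtain ⟨h, hh⟩ := isConj_iff.mp (hwX x hx)
    -- conjugate `x` by `(h, 0)⁻¹` to make its `w`-component equal to `a`
    set g : SDP φ := ⟨h, 0⟩ with hg
    set x' : SDP φ := g⁻¹ * x * g with hx'def
    have hx'X : x' ∈ X := by
      have := hXc g⁻¹ x hx
      simpa [hx'def] using this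
    have hx'w : x'.w = a := by
      have : x'.w = h⁻¹ * x.w * h := by simp [hx'def, hg, mul_assoc]
      rw [this, ← hh]
      group
    have hx'eq : x' = (⟨a, x'.z⟩ : SDP φ) := by
      ext
      · exact hx'w
      · rfl
    have huX : (⟨a, x'.z⟩ : SDP φ) ∈ X := hx'eq ▸ hx'X
    obtain ⟨c, hc, hc0, p, hp⟩ := hk x'.z huX
    -- conjugate the walk `p` back by `g`
    -- endpoints
    have e1 : (commGraphConjHom hXc g ⟨⟨a, x'.z⟩, huX⟩ : X) = ⟨x, hx⟩ := by
      apply Subtype.ext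
      show g * (⟨a, x'.z⟩ : SDP φ) * g⁻¹ = x
      rw [← hx'eq, hx'def]
      group
    have e2 : (commGraphConjHom hXc g ⟨⟨c, 0⟩, hc0⟩ : X)
        = ⟨⟨h * c * h⁻¹, 0⟩, h0 _ (hc.trans (isConj_iff.mpr ⟨h, rfl⟩))⟩ := by
      apply Subtype.ext
      show g * (⟨c, 0⟩ : SDP φ) * g⁻¹ = (⟨h * c * h⁻¹, 0⟩ : SDP φ)
      ext
      · simp [hg]
      · simp [hg]
    have hcXhat : h * c * h⁻¹ ∈ Xhat := hc.trans (isConj_iff.mpr ⟨h, rfl⟩)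
    -- walk in `W` from `h * c * h⁻¹` to `a`, lifted
    obtain ⟨q, hq⟩ := hW ⟨h * c * h⁻¹, hcXhat⟩ ⟨a, haXhat⟩
    have f1 : (commGraphLiftHom h0 ⟨h * c * h⁻¹, hcXhat⟩ : X)
        = ⟨⟨h * c * h⁻¹, 0⟩, h0 _ hcXhat⟩ := rfl
    have f2 : (commGraphLiftHom h0 ⟨a, haXhat⟩ : X) = ⟨⟨a, 0⟩, hbase⟩ := rfl
    refine ⟨(((p.map (commGraphConjHom hXc g)).copy e1 e2).append ((q.map (commGraphLiftHom h0)).copy f1 f2)), ?_⟩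
    rw [SimpleGraph.Walk.length_append, SimpleGraph.Walk.length_copy,
      SimpleGraph.Walk.length_copy, SimpleGraph.Walk.length_map,
      SimpleGraph.Walk.length_map]
    omega
  -- now the general bound
  have main : ∀ x y : X, ∃ p : (commGraph (SDP φ) X).Walk x y, p.length ≤ d + k := by
    rintro ⟨x, hx⟩ ⟨y, hy⟩
    obtain ⟨g, hg⟩ := isConj_iff.mp hy
    have hx' : g⁻¹ * x * g ∈ X := by
      have := hXc g⁻¹ x hx
      simpa using this
    obtain ⟨p, hp⟩ := key ⟨g⁻¹ * x * g, hx'⟩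
    have e1 : (commGraphConjHom hXc g ⟨g⁻¹ * x * g, hx'⟩ : X) = ⟨x, hx⟩ := by
      apply Subtype.ext
      show g * (g⁻¹ * x * g) * g⁻¹ = x
      group
    have e2 : (commGraphConjHom hXc g ⟨⟨a, 0⟩, hbase⟩ : X) = ⟨y, hy⟩ :=
      Subtype.ext hg
    refine ⟨(p.map (commGraphConjHom hXc g)).copy e1 e2, ?_⟩
    rw [SimpleGraph.Walk.length_copy, SimpleGraph.Walk.length_map]
    exact hp
  refine ⟨?_, main⟩
  rw [SimpleGraph.connected_iff]
  refine ⟨fun x y => ?_, ⟨⟨⟨a, 0⟩, hbase⟩⟩⟩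
  obtain ⟨p, _⟩ := main x y
  exact ⟨p⟩
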